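/- Let 1 ≤ N ≤ S be integers and let (σ_n)_{n∈ℕ} and (ξ_n)_{n∈ℕ} be sequences of nonnegative real numbers. Define V^S_0 = 0 ∈ ℝ^S, V^N_0 = 0 ∈ ℝ^N, and the Kiefer–Wolfowitz recursions V^S_{n+1} = sort([V^S_n + σ_n·e₁ − ξ_n·1_S]⁺) and V^N_{n+1} = sort([V^N_n + σ_n·e₁ − ξ_n·1_N]⁺). Then for every n ∈ ℕ, V^S_n(1) ≤ V^N_n(1): the offered waiting time in the S-server system is at most that in the N-server system. -/

import Mathlib

open Finset

/-- The nondecreasing rearrangement of a finite real vector. -/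
noncomputable def sortVec {S : ℕ} (u : Fin S → ℝ) : Fin S → ℝ := u ∘ Tuple.sort u

/-- The Schur-convex semi-ordering `≺_c` : equal total sums, and each tail sum
(from the second coordinate on) of the sorted version of `u` is dominated by that of `v`. -/
def schurLE {S : ℕ} (u v : Fin S → ℝ) : Prop :=
  (∑ i, u i = ∑ i, v i) ∧
  ∀ k : Fin S, 1 ≤ (k : ℕ) →
    ∑ i ∈ Finset.Ici k, sortVec u i ≤ ∑ i ∈ Finset.Ici k, sortVec v i

/-- The semi-ordering `≺_*` : every tail sum of `u` is dominated by that of `v`. -/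
def starLE {S : ℕ} (u v : Fin S → ℝ) : Prop :=
  ∀ k : Fin S, ∑ i ∈ Finset.Ici k, u i ≤ ∑ i ∈ Finset.Ici k, v i

/-- The semi-ordering `≺_P` : `u ≺_* v` and `u(ℓ) ≤ v(ℓ)` for every `ℓ ≥ P`. -/
def precP {S : ℕ} (P : Fin S) (u v : Fin S → ℝ) : Prop :=
  starLE u v ∧ ∀ ℓ : Fin S, P ≤ ℓ → u ℓ ≤ v ℓ

/-- The map `G̃^P : u ↦ sort([u + σ·e_P − ξ·1]⁺)`.  For `P` the first index,
this is the Kiefer–Wolfowitz map `G`. -/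
noncomputable def GP {S : ℕ} (σ ξ : ℝ) (P : Fin S) (u : Fin S → ℝ) : Fin S → ℝ :=
  sortVec (fun i => max (u i + (if i = P then σ else 0) - ξ) 0)

section KWaux
open Finset
variable {S : ℕ}

lemma sortVec_monotone (u : Fin S → ℝ) : Monotone (sortVec u) := Tuple.monotone_sort u

lemma sortVec_nonneg {u : Fin S → ℝ} (h : ∀ i, 0 ≤ u i) (i : Fin S) : 0 ≤ sortVec u i := h _

lemma card_filter_perm (u : Fin S → ℝ) (σ : Equiv.Perm (Fin S)) (t : ℝ) :
    (univ.filter fun i => u (σ i) ≤ t).card = (univ.filter fun i => u i ≤ t).card := by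
  apply Finset.card_bij (fun a _ => σ a)
  · intro a ha; simp only [mem_filter, mem_univ, true_and] at ha ⊢; exact ha
  · intro a _ b _ h; exact σ.injective h
  · intro b hb; refine ⟨σ.symm b, ?_, by simp⟩
    simp only [mem_filter, mem_univ, true_and] at hb ⊢; simpa using hb

lemma card_filter_sortVec (w : Fin S → ℝ) (t : ℝ) :
    (univ.filter fun i => sortVec w i ≤ t).card = (univ.filter fun i => w i ≤ t).card :=
  card_filter_perm w (Tuple.sort w) t

lemma monotone_le_iff_card {g : Fin S → ℝ} (hg : Monotone g) (k : Fin S) (t : ℝ) :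
    g k ≤ t ↔ (k : ℕ) < (univ.filter fun i => g i ≤ t).card := by
  constructor
  · intro h
    have hsub : Finset.Iic k ⊆ univ.filter fun i => g i ≤ t := fun i hi =>
      mem_filter.mpr ⟨mem_univ _, le_trans (hg (mem_Iic.mp hi)) h⟩
    have := Finset.card_le_card hsub
    rw [Fin.card_Iic] at this; omega
  · intro h
    by_contra hgt
    have hsub : (univ.filter fun i => g i ≤ t) ⊆ Finset.Iio k := by
      intro i hi
      rw [mem_Iio]
      by_contra hik
      exact hgt (le_trans (hg (le_of_not_gt hik)) (mem_filter.mp hi).2)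
    have := Finset.card_le_card hsub
    rw [Fin.card_Iio] at this; omega

lemma sortVec_le_iff (w : Fin S → ℝ) (k : Fin S) (t : ℝ) :
    sortVec w k ≤ t ↔ (k : ℕ) < (univ.filter fun i => w i ≤ t).card := by
  rw [monotone_le_iff_card (sortVec_monotone w) k t, card_filter_sortVec]

lemma monotone_eq_of_card {g₁ g₂ : Fin S → ℝ} (h₁ : Monotone g₁) (h₂ : Monotone g₂)
    (h : ∀ t, (univ.filter fun i => g₁ i ≤ t).card = (univ.filter fun i => g₂ i ≤ t).card) :
    g₁ = g₂ := by
  funext k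
  have a1 := monotone_le_iff_card h₁ k
  have a2 := monotone_le_iff_card h₂ k
  refine le_antisymm ?_ ?_
  · rw [a1, h]; exact (a2 _).mp le_rfl
  · rw [a2, ← h]; exact (a1 _).mp le_rfl


def topSet (S a : ℕ) : Finset (Fin S) := univ.filter fun i => S - a ≤ (i : ℕ)

lemma mem_topSet {a : ℕ} {i : Fin S} : i ∈ topSet S a ↔ S - a ≤ (i : ℕ) := by
  simp [topSet]

lemma card_filter_lt_le (m : ℕ) : (univ.filter fun i : Fin S => (i : ℕ) < m).card ≤ m := by
  have : (univ.filter fun i : Fin S => (i : ℕ) < m).card ≤ (Finset.range m).card := by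
    refine Finset.card_le_card_of_injOn (fun i => (i : ℕ)) ?_ ?_
    · intro i hi; simp only [coe_filter, mem_filter, Set.mem_setOf_eq] at hi; simpa using hi.2
    · intro a _ b _ h; exact Fin.ext h
  simpa using this

lemma card_filter_lt (m : ℕ) (hm : m ≤ S) :
    (univ.filter fun i : Fin S => (i : ℕ) < m).card = m := by
  have hsplit := Finset.card_filter_add_card_filter_not
    (s := (univ : Finset (Fin S))) (p := fun i : Fin S => (i : ℕ) < m)
  have hcu : (univ : Finset (Fin S)).card = S := by simp
  have htop : (univ.filter fun i : Fin S => ¬ (i : ℕ) < m).card = S - m := by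
    rcases Nat.eq_or_lt_of_le hm with h | h
    · have he : (univ.filter fun i : Fin S => ¬ (i : ℕ) < m) = ∅ := by
        apply Finset.filter_false_of_mem; intro i _
        have := i.isLt; omega
      rw [he]; simp; omega
    · have : (univ.filter fun i : Fin S => ¬ (i : ℕ) < m) = Finset.Ici (⟨m, h⟩ : Fin S) := by
        ext i; simp [Fin.le_def, not_lt]
      rw [this, Fin.card_Ici]
  omega

lemma card_topSet {a : ℕ} (ha : a ≤ S) : (topSet S a).card = a := by
  have hsplit := Finset.card_filter_add_card_filter_not
    (s := (univ : Finset (Fin S))) (p := fun i : Fin S => (i : ℕ) < S - a)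
  have h2 : (univ.filter fun i : Fin S => ¬ (i : ℕ) < S - a) = topSet S a := by
    ext i; simp [topSet, not_lt]
  rw [card_filter_lt (S - a) (by omega), h2] at hsplit
  have : (univ : Finset (Fin S)).card = S := by simp
  omega

lemma topSet_subset {a b : ℕ} (h : a ≤ b) : topSet S a ⊆ topSet S b := by
  intro i hi; rw [mem_topSet] at hi ⊢; omega

lemma Ici_eq_topSet (k : Fin S) : Finset.Ici k = topSet S (S - (k : ℕ)) := by
  ext i
  have := k.isLt
  simp only [mem_Ici, mem_topSet, Fin.le_def]
  omega

lemma exists_ge_of_card_gt {C : Finset (Fin S)} {m : ℕ} (h : m < C.card) :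
    ∃ j ∈ C, m ≤ (j : ℕ) := by
  by_contra hc
  push_neg at hc
  have hsub : C ⊆ univ.filter fun i : Fin S => (i : ℕ) < m := by
    intro i hi; exact mem_filter.mpr ⟨mem_univ _, hc i hi⟩
  have := (Finset.card_le_card hsub).trans (card_filter_lt_le m)
  omega


lemma orderIsoOfFin_le {A : Finset (Fin S)} {a : ℕ} (ha : A.card = a) (j : Fin a) :
    ((A.orderIsoOfFin ha j : Fin S) : ℕ) ≤ S - a + (j : ℕ) := by
  set f := A.orderIsoOfFin ha
  have hinj : Set.InjOn (fun i : Fin a => (f i : Fin S)) (Finset.Ici j) := by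
    intro i1 _ i2 _ h
    exact (OrderIso.injective f) (Subtype.ext h)
  have hmaps : ∀ i ∈ Finset.Ici j, (f i : Fin S) ∈ Finset.Ici (f j : Fin S) := by
    intro i hi
    simp only [mem_Ici] at hi ⊢
    exact f.monotone hi
  have hcard := Finset.card_le_card_of_injOn (fun i : Fin a => (f i : Fin S)) hmaps hinj
  rw [Fin.card_Ici, Fin.card_Ici] at hcard
  have h1 : ((f j : Fin S) : ℕ) < S := (f j : Fin S).isLt
  have h2 : (j : ℕ) < a := j.isLt
  omega

lemma sum_le_topSet {g : Fin S → ℝ} (hg : Monotone g) {A : Finset (Fin S)} {a : ℕ}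
    (ha : A.card = a) : ∑ i ∈ A, g i ≤ ∑ i ∈ topSet S a, g i := by
  have haS : a ≤ S := by
    have := Finset.card_le_univ A
    simp only [Finset.card_univ, Fintype.card_fin] at this
    omega
  set f := A.orderIsoOfFin ha with hf
  have e2lt : ∀ j : Fin a, S - a + (j : ℕ) < S := by
    intro j; have := j.isLt; omega
  set e2 : Fin a → Fin S := fun j => ⟨S - a + (j : ℕ), e2lt j⟩ with he2
  have h1 : ∑ i ∈ A, g i = ∑ j : Fin a, g (f j : Fin S) := by
    rw [← Finset.sum_coe_sort A g]
    exact (Equiv.sum_comp f.toEquiv (fun x : A => g (x : Fin S))).symm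
  have h2 : ∑ i ∈ topSet S a, g i = ∑ j : Fin a, g (e2 j) := by
    refine (Finset.sum_bij (fun (j : Fin a) (_ : j ∈ univ) => e2 j) ?_ ?_ ?_ ?_).symm
    · intro j _
      rw [mem_topSet]; simp [he2]
    · intro j1 _ j2 _ h
      have : (e2 j1 : ℕ) = (e2 j2 : ℕ) := congrArg _ h
      simp only [he2] at this
      exact Fin.ext (by omega)
    · intro b hb
      rw [mem_topSet] at hb
      have hb2 := b.isLt
      refine ⟨⟨(b : ℕ) - (S - a), by omega⟩, mem_univ _, ?_⟩
      simp only [he2]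
      exact Fin.ext (by simp; omega)
    · intro j _; rfl
  rw [h1, h2]
  apply Finset.sum_le_sum
  intro j _
  apply hg
  rw [Fin.le_def]
  simpa [he2, hf] using orderIsoOfFin_le ha j

lemma sum_le_topSet' {g : Fin S → ℝ} (hg : Monotone g) (h0 : ∀ i, 0 ≤ g i)
    {A : Finset (Fin S)} {m : ℕ} (hA : A.card ≤ m) :
    ∑ i ∈ A, g i ≤ ∑ i ∈ topSet S m, g i :=
  (sum_le_topSet hg rfl).trans (Finset.sum_le_sum_of_subset_of_nonneg
    (topSet_subset hA) (fun i _ _ => h0 i))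

lemma sum_le_sorted_tail {w : Fin S → ℝ} (h0 : ∀ i, 0 ≤ w i) {B : Finset (Fin S)} {m : ℕ}
    (hB : B.card ≤ m) :
    ∑ i ∈ B, w i ≤ ∑ i ∈ topSet S m, sortVec w i := by
  set σ := Tuple.sort w
  set B' := B.image σ.symm with hB'
  have hcard : B'.card = B.card := Finset.card_image_of_injective _ σ.symm.injective
  have hsum : ∑ i ∈ B', sortVec w i = ∑ i ∈ B, w i := by
    rw [hB', Finset.sum_image (by intro x _ y _ h; exact σ.symm.injective h)]
    apply Finset.sum_congr rfl
    intro i _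
    show w (σ (σ.symm i)) = w i
    rw [Equiv.apply_symm_apply]
  rw [← hsum]
  exact sum_le_topSet' (sortVec_monotone w) (sortVec_nonneg h0) (by omega)

lemma sorted_tail_eq_sum (w : Fin S → ℝ) (T : Finset (Fin S)) :
    ∑ i ∈ T, sortVec w i = ∑ i ∈ T.image (Tuple.sort w), w i := by
  rw [Finset.sum_image (by intro x _ y _ h; exact (Tuple.sort w).injective h)]
  rfl


lemma star_topSet {u v : Fin S → ℝ} (hstar : starLE u v) {a : ℕ} (ha1 : 1 ≤ a) (haS : a ≤ S) :
    ∑ i ∈ topSet S a, u i ≤ ∑ i ∈ topSet S a, v i := by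
  have hk : S - a < S := by omega
  have h := hstar ⟨S - a, hk⟩
  rwa [Ici_eq_topSet, show S - (S - a) = a by omega] at h

lemma step_star {u v : Fin S → ℝ} {P P0 : Fin S} (hP0 : ∀ i, P0 ≤ i)
    (hu : Monotone u) (hstar : starLE u v) (hle : ∀ ℓ, P ≤ ℓ → u ℓ ≤ v ℓ)
    {σ ξ : ℝ} (hσ : 0 ≤ σ) (hξ : 0 ≤ ξ) :
    starLE (GP σ ξ P0 u) (GP σ ξ P v) := by
  intro k
  set x : Fin S → ℝ := fun i => u i + (if i = P0 then σ else 0) - ξ with hx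
  set x' : Fin S → ℝ := fun i => v i + (if i = P then σ else 0) - ξ with hx'
  set w : Fin S → ℝ := fun i => max (x i) 0 with hw
  set w' : Fin S → ℝ := fun i => max (x' i) 0 with hw'
  have hgoal : GP σ ξ P0 u = sortVec w := rfl
  have hgoal' : GP σ ξ P v = sortVec w' := rfl
  rw [hgoal, hgoal', Ici_eq_topSet]
  set m := S - (k : ℕ) with hm
  have hm1 : 1 ≤ m := by have := k.isLt; omega
  have hmS : m ≤ S := by omega
  -- left side as a sum of x over a set A of card ≤ m
  set B₀ := (topSet S m).image (Tuple.sort w) with hB₀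
  have hB₀card : B₀.card = m := by
    rw [hB₀, Finset.card_image_of_injective _ (Tuple.sort w).injective, card_topSet hmS]
  set A := B₀.filter (fun i => 0 ≤ x i) with hA
  have hAcard : A.card ≤ m := by
    rw [← hB₀card]; exact Finset.card_filter_le _ _
  have hleft : ∑ i ∈ topSet S m, sortVec w i = ∑ i ∈ A, x i := by
    rw [sorted_tail_eq_sum, ← hB₀]
    rw [Finset.sum_filter]
    apply Finset.sum_congr rfl
    intro i _
    by_cases h : 0 ≤ x i
    · simp [h, hw, max_eq_left h]
    · simp [h, hw, max_eq_right (le_of_not_ge h)]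
  rw [hleft]
  -- it suffices to find B with card ≤ m and ∑_A x ≤ ∑_B x'
  suffices hsuff : ∃ B : Finset (Fin S), B.card ≤ m ∧ ∑ i ∈ A, x i ≤ ∑ i ∈ B, x' i by
    obtain ⟨B, hBc, hBle⟩ := hsuff
    refine hBle.trans (le_trans (Finset.sum_le_sum (fun i _ => ?_)) (sum_le_sorted_tail (fun i => le_max_right _ _) hBc))
    exact le_max_left _ _
  set a := A.card with ha
  -- sum decomposition of ∑_A x
  have hsumA : ∑ i ∈ A, x i = ∑ i ∈ A, u i + (if P0 ∈ A then σ else 0) - (a : ℝ) * ξ := by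
    rw [hx]
    rw [Finset.sum_sub_distrib, Finset.sum_add_distrib]
    rw [Finset.sum_ite_eq' A P0 (fun _ => σ)]
    simp [ha, mul_comm]
  rcases Nat.eq_zero_or_pos a with ha0 | ha1
  · refine ⟨∅, by simp, ?_⟩
    have : A = ∅ := Finset.card_eq_zero.mp (by omega)
    simp [this]
  have haS : a ≤ S := by omega
  by_cases hcase : P0 ∈ A ∧ (P : ℕ) < S - a
  · -- B = insert P (topSet S (a-1))
    obtain ⟨hP0A, hPsmall⟩ := hcase
    have hPnot : P ∉ topSet S (a - 1) := by
      rw [mem_topSet]; omega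
    refine ⟨insert P (topSet S (a - 1)), ?_, ?_⟩
    · rw [Finset.card_insert_of_notMem hPnot, card_topSet (by omega)]; omega
    rw [Finset.sum_insert hPnot, hsumA, if_pos hP0A]
    have hxP : x' P = v P + σ - ξ := by simp [hx']
    have hrest : ∑ i ∈ topSet S (a - 1), x' i = ∑ i ∈ topSet S (a - 1), v i - ((a : ℝ) - 1) * ξ := by
      have : ∀ i ∈ topSet S (a - 1), x' i = v i - ξ := by
        intro i hi
        rw [mem_topSet] at hi
        have : i ≠ P := by
          intro h; rw [h] at hi; omega
        simp [hx', this]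
      rw [Finset.sum_congr rfl this, Finset.sum_sub_distrib, Finset.sum_const,
        card_topSet (by omega : a - 1 ≤ S), nsmul_eq_mul, Nat.cast_sub ha1]
      push_cast
      ring
    rw [hxP, hrest]
    have hmain : ∑ i ∈ A, u i ≤ v P + ∑ i ∈ topSet S (a - 1), v i := by
      have h1 : ∑ i ∈ A, u i = u P0 + ∑ i ∈ A.erase P0, u i :=
        (Finset.add_sum_erase A u hP0A).symm
      have h2 : ∑ i ∈ A.erase P0, u i ≤ ∑ i ∈ topSet S (a - 1), u i :=
        sum_le_topSet hu (by rw [Finset.card_erase_of_mem hP0A, ← ha])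
      have h3 : ∑ i ∈ topSet S (a - 1), u i ≤ ∑ i ∈ topSet S (a - 1), v i := by
        apply Finset.sum_le_sum
        intro i hi
        rw [mem_topSet] at hi
        apply hle
        rw [Fin.le_def]; omega
      have h4 : u P0 ≤ v P := le_trans (hu (hP0 P)) (hle P le_rfl)
      linarith
    have hcast : ((a : ℝ)) = ((a : ℝ) - 1) + 1 := by ring
    linarith
  · -- B = topSet S a
    refine ⟨topSet S a, le_of_eq (card_topSet haS) |>.trans (by omega : a ≤ m), ?_⟩
    have hsumB : ∑ i ∈ topSet S a, x' i
        = ∑ i ∈ topSet S a, v i + (if P ∈ topSet S a then σ else 0) - (a : ℝ) * ξ := by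
      rw [hx', Finset.sum_sub_distrib, Finset.sum_add_distrib]
      rw [Finset.sum_ite_eq' (topSet S a) P (fun _ => σ)]
      rw [Finset.sum_const, card_topSet haS]
      simp [mul_comm]
    rw [hsumA, hsumB]
    have hAu : ∑ i ∈ A, u i ≤ ∑ i ∈ topSet S a, v i :=
      (sum_le_topSet hu rfl).trans (star_topSet hstar ha1 haS)
    have hite : (if P0 ∈ A then σ else 0) ≤ (if P ∈ topSet S a then σ else 0) := by
      by_cases hP0A : P0 ∈ A
      · have : P ∈ topSet S a := by
          rw [mem_topSet]
          rcases not_and_or.mp hcase with h | h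
          · exact absurd hP0A h
          · omega
        simp [hP0A, this]
      · simp only [if_neg hP0A]
        by_cases h : P ∈ topSet S a <;> simp [h, hσ]
    linarith


lemma count_claim {u v : Fin S → ℝ} {P P0 : Fin S} (hP0 : ∀ i, P0 ≤ i)
    (hu : Monotone u) (hv : Monotone v) (hle : ∀ ℓ, P ≤ ℓ → u ℓ ≤ v ℓ)
    {σ : ℝ} (hσ : 0 ≤ σ) (s : ℝ) :
    (univ.filter fun i => v i + (if i = P then σ else 0) ≤ s).card ≤
      max (P : ℕ) (univ.filter fun i => u i + (if i = P0 then σ else 0) ≤ s).card := by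
  set C' := univ.filter fun i => v i + (if i = P then σ else 0) ≤ s with hC'
  set C := univ.filter fun i => u i + (if i = P0 then σ else 0) ≤ s with hC
  set q' := C'.card with hq'
  rcases le_or_gt q' (P : ℕ) with h | hq'P
  · exact le_max_of_le_left h
  refine le_max_of_le_right ?_
  have hP0val : (P0 : ℕ) = 0 := by
    have h0 : (P0 : ℕ) ≤ 0 := by
      simpa [Fin.le_def] using hP0 ⟨0, lt_of_le_of_lt (Nat.zero_le _) P.isLt⟩
    omega
  have hq'S : q' ≤ S := by
    have := Finset.card_le_univ C'
    simpa using this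
  have memC' : ∀ {j : Fin S}, j ∈ C' → v j + (if j = P then σ else 0) ≤ s := by
    intro j hj; exact (mem_filter.mp hj).2
  have memC : ∀ {i : Fin S}, u i + (if i = P0 then σ else 0) ≤ s → i ∈ C := by
    intro i hi; exact mem_filter.mpr ⟨mem_univ _, hi⟩
  by_cases hPC : v P + σ ≤ s
  · -- D = {i : ↑i < q'} ⊆ C
    obtain ⟨j, hjC, hjge⟩ := exists_ge_of_card_gt (show q' - 1 < C'.card by omega)
    have hvPs : v P ≤ s := by linarith
    have hsub : (univ.filter fun i : Fin S => (i : ℕ) < q') ⊆ C := by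
      intro i hi
      rw [mem_filter] at hi
      have hiq : (i : ℕ) < q' := hi.2
      apply memC
      by_cases hiP0 : i = P0
      · rw [if_pos hiP0, hiP0]
        have : u P0 ≤ v P := le_trans (hu (hP0 P)) (hle P le_rfl)
        linarith
      · rw [if_neg hiP0, add_zero]
        by_cases hiP : (i : ℕ) ≤ (P : ℕ)
        · exact le_trans (le_trans (hu (by rw [Fin.le_def]; omega)) (hle P le_rfl)) hvPs
        · have hjP : j ≠ P := by
            intro h
            rw [h] at hjge
            omega
          have hvj : v j ≤ s := by
            have := memC' hjC
            rwa [if_neg hjP, add_zero] at this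
          have h1 : u i ≤ v i := hle i (by rw [Fin.le_def]; omega)
          have h2 : v i ≤ v j := hv (by rw [Fin.le_def]; omega)
          linarith
    calc q' = (univ.filter fun i : Fin S => (i : ℕ) < q').card := (card_filter_lt q' hq'S).symm
      _ ≤ C.card := Finset.card_le_card hsub
  · have hPC' : P ∉ C' := by
      rw [hC', mem_filter]
      simp only [if_pos rfl]
      tauto
    have hq'lt : q' < S := by
      rcases Nat.eq_or_lt_of_le hq'S with h | h
      · exfalso
        have : C' = univ := Finset.eq_univ_of_card _ (by simp [← hq', h])
        exact hPC' (this ▸ mem_univ P)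
      · exact h
    obtain ⟨j, hjC, hjge⟩ : ∃ j ∈ C', q' ≤ (j : ℕ) := by
      by_contra hc
      push_neg at hc
      have hsub : C' ⊆ (univ.filter fun i : Fin S => (i : ℕ) < q').erase P := by
        intro i hi
        refine Finset.mem_erase.mpr ⟨fun h => hPC' (h ▸ hi), ?_⟩
        exact mem_filter.mpr ⟨mem_univ _, hc i hi⟩
      have hcard := Finset.card_le_card hsub
      have hPmem : P ∈ (univ.filter fun i : Fin S => (i : ℕ) < q') :=
        mem_filter.mpr ⟨mem_univ _, hq'P⟩
      rw [Finset.card_erase_of_mem hPmem, card_filter_lt q' hq'S] at hcard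
      omega
    have hjP : j ≠ P := by
      intro h; rw [h] at hjge; omega
    have hvj : v j ≤ s := by
      have := memC' hjC
      rwa [if_neg hjP, add_zero] at this
    have hsub : (univ.filter fun i : Fin S => (i : ℕ) < q' + 1).erase P0 ⊆ C := by
      intro i hi
      obtain ⟨hiP0, hi2⟩ := Finset.mem_erase.mp hi
      have hiq : (i : ℕ) < q' + 1 := (mem_filter.mp hi2).2
      have hi1 : 1 ≤ (i : ℕ) := by
        rcases Nat.eq_zero_or_pos (i : ℕ) with h | h
        · exact absurd (Fin.ext (by omega)) hiP0
        · omega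
      apply memC
      rw [if_neg hiP0, add_zero]
      by_cases hiP : (i : ℕ) ≤ (P : ℕ)
      · have h1 : u i ≤ v P := le_trans (hu (by rw [Fin.le_def]; omega)) (hle P le_rfl)
        have h2 : v P ≤ v j := hv (by rw [Fin.le_def]; omega)
        linarith
      · have h1 : u i ≤ v i := hle i (by rw [Fin.le_def]; omega)
        have h2 : v i ≤ v j := hv (by rw [Fin.le_def]; omega)
        linarith
    have hcard := Finset.card_le_card hsub
    have hP0mem : P0 ∈ (univ.filter fun i : Fin S => (i : ℕ) < q' + 1) :=
      mem_filter.mpr ⟨mem_univ _, by omega⟩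
    rw [Finset.card_erase_of_mem hP0mem, card_filter_lt (q' + 1) (by omega)] at hcard
    omega

lemma step_coord {u v : Fin S → ℝ} {P P0 : Fin S} (hP0 : ∀ i, P0 ≤ i)
    (hu : Monotone u) (hv : Monotone v) (hle : ∀ ℓ, P ≤ ℓ → u ℓ ≤ v ℓ)
    {σ ξ : ℝ} (hσ : 0 ≤ σ) :
    ∀ ℓ, P ≤ ℓ → GP σ ξ P0 u ℓ ≤ GP σ ξ P v ℓ := by
  intro ℓ hℓ
  set x : Fin S → ℝ := fun i => u i + (if i = P0 then σ else 0) - ξ with hx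
  set x' : Fin S → ℝ := fun i => v i + (if i = P then σ else 0) - ξ with hx'
  set w : Fin S → ℝ := fun i => max (x i) 0 with hw
  set w' : Fin S → ℝ := fun i => max (x' i) 0 with hw'
  show sortVec w ℓ ≤ sortVec w' ℓ
  set t := sortVec w' ℓ with ht
  have ht0 : 0 ≤ t := sortVec_nonneg (fun i => le_max_right _ _) ℓ
  have h1 : (ℓ : ℕ) < (univ.filter fun i => w' i ≤ t).card :=
    (sortVec_le_iff w' ℓ t).mp le_rfl
  have hfeq : ∀ (y : Fin S → ℝ) (b : Fin S),
      (univ.filter fun i => (max (y i + (if i = b then σ else 0) - ξ) 0) ≤ t)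
      = univ.filter fun i => y i + (if i = b then σ else 0) ≤ t + ξ := by
    intro y b
    apply Finset.filter_congr
    intro i _
    simp only [max_le_iff, sub_le_iff_le_add, eq_iff_iff]
    constructor
    · exact fun h => h.1
    · exact fun h => ⟨h, ht0⟩
  have h2 : (univ.filter fun i => w' i ≤ t).card ≤
      max (P : ℕ) (univ.filter fun i => w i ≤ t).card := by
    rw [hw, hw', hfeq u P0, hfeq v P]
    exact count_claim hP0 hu hv hle hσ (t + ξ)
  have h3 : (ℓ : ℕ) < (univ.filter fun i => w i ≤ t).card := by
    have := lt_of_lt_of_le h1 h2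
    rcases lt_max_iff.mp this with h | h
    · exact absurd h (not_lt.mpr (Fin.le_def.mp hℓ))
    · exact h
  exact (sortVec_le_iff w ℓ t).mpr h3


end KWaux

section KWpad
open Finset
variable {N S : ℕ}

def pad (hN : 0 < N) (hNS : N ≤ S) (x : Fin N → ℝ) : Fin S → ℝ := fun i =>
  if h : (i : ℕ) < S - N then 0 else x ⟨(i : ℕ) - (S - N), by have := i.isLt; omega⟩

lemma pad_lt (hN : 0 < N) (hNS : N ≤ S) {x : Fin N → ℝ} {i : Fin S} (h : (i : ℕ) < S - N) : pad hN hNS x i = 0 :=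
  dif_pos h

lemma pad_ge (hN : 0 < N) (hNS : N ≤ S) {x : Fin N → ℝ} {i : Fin S} (h : ¬ (i : ℕ) < S - N) :
    pad hN hNS x i = x ⟨(i : ℕ) - (S - N), by have := i.isLt; omega⟩ :=
  dif_neg h

lemma pad_nonneg (hN : 0 < N) (hNS : N ≤ S) {x : Fin N → ℝ} (hx : ∀ j, 0 ≤ x j) (i : Fin S) : 0 ≤ pad hN hNS x i := by
  unfold pad
  split
  · exact le_refl 0
  · exact hx _

lemma pad_monotone (hN : 0 < N) (hNS : N ≤ S) {x : Fin N → ℝ} (hx : Monotone x) (hx0 : ∀ j, 0 ≤ x j) :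
    Monotone (pad hN hNS x) := by
  intro i1 i2 h12
  rw [Fin.le_def] at h12
  by_cases h1 : (i1 : ℕ) < S - N
  · rw [pad_lt hN hNS h1]
    exact pad_nonneg hN hNS hx0 i2
  · have h2 : ¬ (i2 : ℕ) < S - N := by omega
    rw [pad_ge hN hNS h1, pad_ge hN hNS h2]
    exact hx (by rw [Fin.le_def]; simp; omega)

lemma pad_count (hN : 0 < N) (hNS : N ≤ S) (x : Fin N → ℝ) (t : ℝ) :
    (univ.filter fun i => pad hN hNS x i ≤ t).card =
      (if 0 ≤ t then S - N else 0) + (univ.filter fun j => x j ≤ t).card := by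
  classical
  have hsplit := Finset.card_filter_add_card_filter_not
    (s := univ.filter fun i => pad hN hNS x i ≤ t) (p := fun i : Fin S => (i : ℕ) < S - N)
  rw [Finset.filter_filter, Finset.filter_filter] at hsplit
  have h1 : ((univ : Finset (Fin S)).filter fun i => pad hN hNS x i ≤ t ∧ (i : ℕ) < S - N).card
      = if 0 ≤ t then S - N else 0 := by
    by_cases h0 : 0 ≤ t
    · rw [if_pos h0]
      have hset : ((univ : Finset (Fin S)).filter fun i => pad hN hNS x i ≤ t ∧ (i : ℕ) < S - N)
          = (univ.filter fun i : Fin S => (i : ℕ) < S - N) := by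
        apply Finset.filter_congr
        intro i _
        constructor
        · exact fun h => h.2
        · intro h; exact ⟨by rw [pad_lt hN hNS h]; exact h0, h⟩
      rw [hset, card_filter_lt (S - N) (by omega)]
    · rw [if_neg h0]
      rw [Finset.card_eq_zero]
      apply Finset.filter_false_of_mem
      intro i _
      rintro ⟨hle, hlt⟩
      rw [pad_lt hN hNS hlt] at hle
      exact h0 hle
  have h2 : ((univ : Finset (Fin S)).filter fun i => pad hN hNS x i ≤ t ∧ ¬ (i : ℕ) < S - N).card
      = (univ.filter fun j => x j ≤ t).card := by
    apply Finset.card_bij (fun (i : Fin S) hi => (⟨(i : ℕ) - (S - N), by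
      have := i.isLt; have := (mem_filter.mp hi).2.2; omega⟩ : Fin N))
    · intro i hi
      obtain ⟨-, hle, hge⟩ := mem_filter.mp hi
      rw [pad_ge hN hNS hge] at hle
      exact mem_filter.mpr ⟨mem_univ _, hle⟩
    · intro i1 h1 i2 h2 heq
      have hg1 := (mem_filter.mp h1).2.2
      have hg2 := (mem_filter.mp h2).2.2
      have := congrArg Fin.val heq
      simp only at this
      exact Fin.ext (by omega)
    · intro j hj
      have hjle := (mem_filter.mp hj).2
      have hlt : S - N + (j : ℕ) < S := by have := j.isLt; omega
      refine ⟨⟨S - N + (j : ℕ), hlt⟩, ?_, ?_⟩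
      · apply mem_filter.mpr
        refine ⟨mem_univ _, ?_, by simp⟩
        rw [pad_ge hN hNS (by simp)]
        convert hjle using 2
        exact Fin.ext (by simp)
      · exact Fin.ext (by simp)
  omega

lemma sortVec_pad (hN : 0 < N) (hNS : N ≤ S) {x : Fin N → ℝ} (hx0 : ∀ j, 0 ≤ x j) :
    sortVec (pad hN hNS x) = pad hN hNS (sortVec x) := by
  apply monotone_eq_of_card (sortVec_monotone _)
    (pad_monotone hN hNS (sortVec_monotone x) (sortVec_nonneg hx0))
  intro t
  rw [card_filter_sortVec, pad_count hN hNS, pad_count hN hNS, card_filter_sortVec]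

lemma GP_pad (hN : 0 < N) (hNS : N ≤ S) {σ ξ : ℝ} (hξ : 0 ≤ ξ) (x : Fin N → ℝ) (hx0 : ∀ j, 0 ≤ x j)
    (hKS : S - N < S) :
    GP σ ξ ⟨S - N, hKS⟩ (pad hN hNS x) = pad hN hNS (GP σ ξ ⟨0, hN⟩ x) := by
  unfold GP
  have hinner : (fun i => max (pad hN hNS x i + (if i = ⟨S - N, hKS⟩ then σ else 0) - ξ) 0)
      = pad hN hNS (fun j => max (x j + (if j = (⟨0, hN⟩ : Fin N) then σ else 0) - ξ) 0) := by
    funext i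
    by_cases h : (i : ℕ) < S - N
    · rw [pad_lt hN hNS h, pad_lt hN hNS h]
      have hne : i ≠ (⟨S - N, hKS⟩ : Fin S) := by
        intro he; rw [he] at h; simp at h
      rw [if_neg hne]
      simp
      linarith
    · rw [pad_ge hN hNS h, pad_ge hN hNS h]
      have hcond : ((i : ℕ) = S - N) ↔ ((i : ℕ) - (S - N) = 0) := by omega
      simp only [Fin.ext_iff, Fin.val_mk, hcond]
  rw [hinner]
  exact sortVec_pad hN hNS (fun j => le_max_right _ _)


end KWpad

/-- with `N ≤ S` servers, both systems started empty and fed by the same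
arrivals and services, the offered waiting time with `S` servers is at most that with
`N` servers. -/

theorem KW_compare_waiting_time {N S : ℕ} (hN : 0 < N) (hNS : N ≤ S) (σ ξ : ℕ → ℝ)
    (hσ : ∀ n, 0 ≤ σ n) (hξ : ∀ n, 0 ≤ ξ n)
    (VS : ℕ → Fin S → ℝ) (VN : ℕ → Fin N → ℝ)
    (hVS0 : VS 0 = fun _ => 0) (hVN0 : VN 0 = fun _ => 0)
    (hVSrec : ∀ n, VS (n + 1) = GP (σ n) (ξ n) ⟨0, hN.trans_le hNS⟩ (VS n))
    (hVNrec : ∀ n, VN (n + 1) = GP (σ n) (ξ n) ⟨0, hN⟩ (VN n)) :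
    ∀ n, VS n ⟨0, hN.trans_le hNS⟩ ≤ VN n ⟨0, hN⟩ := by
  have hS : 0 < S := hN.trans_le hNS
  have hKS : S - N < S := by omega
  set P0 : Fin S := ⟨0, hS⟩ with hP0def
  set P : Fin S := ⟨S - N, hKS⟩ with hPdef
  have hP0 : ∀ i : Fin S, P0 ≤ i := fun i => by
    rw [Fin.le_def]; exact Nat.zero_le _
  have key : ∀ n, (Monotone (VS n) ∧ (∀ j, 0 ≤ VN n j) ∧ Monotone (VN n)) ∧
      starLE (VS n) (pad hN hNS (VN n)) ∧
      (∀ ℓ, P ≤ ℓ → VS n ℓ ≤ pad hN hNS (VN n) ℓ) := by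
    intro n
    induction n with
    | zero =>
      rw [hVS0, hVN0]
      refine ⟨⟨monotone_const, fun _ => le_rfl, monotone_const⟩, ?_, ?_⟩
      · intro k
        apply Finset.sum_le_sum
        intro i _
        exact pad_nonneg hN hNS (fun _ => le_rfl) i
      · intro ℓ _
        exact pad_nonneg hN hNS (fun _ => le_rfl) ℓ
    | succ n ih =>
      obtain ⟨⟨hSm, hNn0, hNm⟩, hstar, hcoord⟩ := ih
      have hpadm : Monotone (pad hN hNS (VN n)) := pad_monotone hN hNS hNm hNn0
      have hpeq : pad hN hNS (VN (n + 1)) = GP (σ n) (ξ n) P (pad hN hNS (VN n)) := by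
        rw [hVNrec n, ← GP_pad hN hNS (hξ n) (VN n) hNn0 hKS]
      have hP0eq : (⟨0, hS⟩ : Fin S) = P0 := rfl
      refine ⟨⟨?_, ?_, ?_⟩, ?_, ?_⟩
      · rw [hVSrec n]
        exact sortVec_monotone _
      · rw [hVNrec n]
        exact sortVec_nonneg (fun i => le_max_right _ _)
      · rw [hVNrec n]
        exact sortVec_monotone _
      · rw [hVSrec n, hpeq]
        exact step_star hP0 hSm hstar hcoord (hσ n) (hξ n)
      · rw [hVSrec n, hpeq]
        exact step_coord hP0 hSm hpadm hcoord (hσ n)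
  intro n
  obtain ⟨⟨hSm, _, _⟩, _, hcoord⟩ := key n
  have h1 : VS n P0 ≤ VS n P := hSm (hP0 P)
  have h2 : VS n P ≤ pad hN hNS (VN n) P := hcoord P le_rfl
  have h3 : pad hN hNS (VN n) P = VN n ⟨0, hN⟩ := by
    rw [pad_ge hN hNS (lt_irrefl (S - N))]
    congr 1
    exact Fin.ext (by simp [hPdef])
  exact le_trans h1 (le_of_le_of_eq h2 h3)
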